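/- Assume a < b and 2r ≤ a². If 𝒮 and 𝒫 are tangent at some point, then the characteristic polynomial f has a real root of multiplicity at least 2. -/

import Mathlib

open Matrix Polynomial

/-- The 4×4 matrix of the elliptic paraboloid x²/a² + y²/b² - z = 0. -/
noncomputable def Pmat (a b : ℝ) : Matrix (Fin 4) (Fin 4) ℝ :=
  !![1/a^2, 0, 0, 0;
     0, 1/b^2, 0, 0;
     0, 0, 0, -(1/2 : ℝ);
     0, 0, -(1/2 : ℝ), 0]

/-- The 4×4 matrix of the sphere (x-x_c)² + (y-y_c)² + (z-z_c)² = r². -/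
noncomputable def Smat (xc yc zc r : ℝ) : Matrix (Fin 4) (Fin 4) ℝ :=
  !![1, 0, 0, -xc;
     0, 1, 0, -yc;
     0, 0, 1, -zc;
     -xc, -yc, -zc, xc^2 + yc^2 + zc^2 - r^2]

/-- The characteristic polynomial f(λ) = det(λP + S), as a real polynomial in λ. -/
noncomputable def charPoly (a b xc yc zc r : ℝ) : Polynomial ℝ :=
  Matrix.det ((X : Polynomial ℝ) • (Pmat a b).map C + (Smat xc yc zc r).map C)

theorem my_det_fin_four {R : Type*} [CommRing R] (A : Matrix (Fin 4) (Fin 4) R) :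
    A.det =
      A 0 0 * (A 1 1 * A 2 2 * A 3 3 - A 1 1 * A 2 3 * A 3 2 - A 1 2 * A 2 1 * A 3 3
        + A 1 2 * A 2 3 * A 3 1 + A 1 3 * A 2 1 * A 3 2 - A 1 3 * A 2 2 * A 3 1)
      - A 0 1 * (A 1 0 * A 2 2 * A 3 3 - A 1 0 * A 2 3 * A 3 2 - A 1 2 * A 2 0 * A 3 3
        + A 1 2 * A 2 3 * A 3 0 + A 1 3 * A 2 0 * A 3 2 - A 1 3 * A 2 2 * A 3 0)
      + A 0 2 * (A 1 0 * A 2 1 * A 3 3 - A 1 0 * A 2 3 * A 3 1 - A 1 1 * A 2 0 * A 3 3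
        + A 1 1 * A 2 3 * A 3 0 + A 1 3 * A 2 0 * A 3 1 - A 1 3 * A 2 1 * A 3 0)
      - A 0 3 * (A 1 0 * A 2 1 * A 3 2 - A 1 0 * A 2 2 * A 3 1 - A 1 1 * A 2 0 * A 3 2
        + A 1 1 * A 2 2 * A 3 0 + A 1 2 * A 2 0 * A 3 1 - A 1 2 * A 2 1 * A 3 0) := by
  rw [Matrix.det_succ_row_zero, Fin.sum_univ_four]
  simp (config := { decide := true }) [Matrix.det_fin_three, Matrix.submatrix_apply,
    Fin.succAbove, Fin.lt_def, show (Fin.succ 2 : Fin 4) = 3 from rfl,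
    show (Fin.castSucc 2 : Fin 4) = 2 from rfl]
  ring

set_option maxHeartbeats 1000000 in
lemma charPoly_eq (a b xc yc zc r : ℝ) :
    charPoly a b xc yc zc r =
      (X * C (1/a^2) + 1) * (X * C (1/b^2) + 1) *
        (C (xc^2+yc^2+zc^2-r^2) - (X * C (-(1/2)) + C (-zc))^2)
      - (X * C (1/a^2) + 1) * C (-yc)^2 - (X * C (1/b^2) + 1) * C (-xc)^2 := by
  unfold charPoly Pmat Smat
  rw [my_det_fin_four]
  simp [Matrix.vecHead, Matrix.vecTail]
  ring

set_option maxHeartbeats 1000000 in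
lemma charPoly_eq2 (a b xc yc zc r : ℝ) :
    charPoly a b xc yc zc r =
      C (-r^2)
      + C ((1/a^2)*xc^2 + (1/b^2)*yc^2 - ((1/a^2)+(1/b^2))*r^2 - 2*(1/2)*zc) * X^1
      + C ((1/a^2)*(1/b^2)*(xc^2+yc^2-r^2) - 2*(1/2)*((1/a^2)+(1/b^2))*zc - (1/2)*(1/2)) * X^2
      + C (-(2*(1/2)*(1/a^2)*(1/b^2)*zc + (1/2)*(1/2)*((1/a^2)+(1/b^2)))) * X^3
      + C (-((1/2)*(1/2)*(1/a^2)*(1/b^2))) * X^4 := by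
  rw [charPoly_eq]
  simp only [_root_.map_add, _root_.map_mul, _root_.map_sub, _root_.map_neg, _root_.map_pow,
    _root_.map_one, map_ofNat]
  ring

/-- The sphere and the paraboloid are tangent at the point (x,y,z):
with X = (x,y,z,1)ᵗ one has XᵗPX = 0, XᵗSX = 0 and for every Y,
YᵗPX = 0 iff YᵗSX = 0 (same tangent plane). -/
def TangentAt (a b xc yc zc r x y z : ℝ) : Prop :=
  ![x, y, z, 1] ⬝ᵥ (Pmat a b).mulVec ![x, y, z, 1] = 0 ∧
  ![x, y, z, 1] ⬝ᵥ (Smat xc yc zc r).mulVec ![x, y, z, 1] = 0 ∧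
  ∀ Y : Fin 4 → ℝ,
    Y ⬝ᵥ (Pmat a b).mulVec ![x, y, z, 1] = 0 ↔
    Y ⬝ᵥ (Smat xc yc zc r).mulVec ![x, y, z, 1] = 0

/-- (a < b, smallness) if the sphere and the paraboloid are
tangent at some point, then f has a multiple real root. -/
theorem tangent_implies_multiple_root (a b r xc yc zc : ℝ)
    (ha : 0 < a) (hab : a < b) (hr : 0 < r) (hsmall : 2*r ≤ a^2)
    (htan : ∃ x y z : ℝ, TangentAt a b xc yc zc r x y z) :
    ∃ l : ℝ, 2 ≤ rootMultiplicity l (charPoly a b xc yc zc r) := by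
  obtain ⟨x, y, z, h1, h2, h3⟩ := htan
  have ha0 : a ≠ 0 := ne_of_gt ha
  have hb0 : b ≠ 0 := ne_of_gt (lt_trans ha hab)
  simp [Pmat, Matrix.mulVec, dotProduct, Fin.sum_univ_four, Matrix.vecHead,
    Matrix.vecTail] at h1
  have hA := (h3 ![1, 0, 2*x/a^2, 0]).mp (by
    simp [Pmat, Matrix.mulVec, dotProduct, Fin.sum_univ_four, Matrix.vecHead,
      Matrix.vecTail]
    field_simp
    ring)
  have hB := (h3 ![0, 1, 2*y/b^2, 0]).mp (by
    simp [Pmat, Matrix.mulVec, dotProduct, Fin.sum_univ_four, Matrix.vecHead,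
      Matrix.vecTail]
    field_simp
    ring)
  have hC := (h3 ![0, 0, -z, 1]).mp (by
    simp [Pmat, Matrix.mulVec, dotProduct, Fin.sum_univ_four, Matrix.vecHead,
      Matrix.vecTail]
    ring)
  simp [Smat, Matrix.mulVec, dotProduct, Fin.sum_univ_four, Matrix.vecHead,
    Matrix.vecTail] at hA hB hC
  have hxc : xc = x + 2*x*(z - zc)/a^2 := by linear_combination -hA
  have hyc : yc = y + 2*y*(z - zc)/b^2 := by linear_combination -hB
  have he1 : z = x^2/a^2 + y^2/b^2 := by linear_combination -h1
  have hf0 : charPoly a b xc yc zc r ≠ 0 := by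
    intro h0
    have hc : (charPoly a b xc yc zc r).coeff 4 = 0 := by rw [h0]; simp
    rw [charPoly_eq2] at hc
    simp only [Polynomial.coeff_add, Polynomial.coeff_C_mul, Polynomial.coeff_X_pow,
      Polynomial.coeff_C] at hc
    norm_num at hc
    tauto
  refine ⟨2*(z - zc), ?_⟩
  have h2le : 1 < rootMultiplicity (2*(z - zc)) (charPoly a b xc yc zc r) := by
    rw [Polynomial.one_lt_rootMultiplicity_iff_isRoot hf0]
    constructor
    · show Polynomial.eval _ _ = 0
      rw [charPoly_eq2, hxc, hyc]
      rw [hxc, hyc] at hC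
      simp only [eval_add, eval_mul, eval_pow, eval_C, eval_X, eval_neg, eval_sub, eval_one]
      linear_combination ((1 + 2*(z-zc)/a^2) * (1 + 2*(z-zc)/b^2)) * hC
    · show Polynomial.eval _ _ = 0
      rw [charPoly_eq2, hxc, hyc]
      rw [hxc, hyc] at hC
      simp only [derivative_add, derivative_mul, derivative_C, derivative_X_pow, derivative_X,
        derivative_one, eval_add, eval_mul, eval_pow, eval_C, eval_X, eval_neg, eval_sub,
        eval_one, eval_natCast, zero_mul, mul_one, zero_add, add_zero, mul_zero]
      linear_combination ((1/a^2)*(1 + 2*(z-zc)/b^2) + (1/b^2)*(1 + 2*(z-zc)/a^2)) * hC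
        - ((1 + 2*(z-zc)/a^2)*(1 + 2*(z-zc)/b^2)) * he1
  exact h2le
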